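/- There exists an asymmetric norm q on ℝ³ such that the closed unit ball B_1^q[0] = {y ∈ ℝ³ : q(y) ≤ 1} is compact in the topology τ_q but is not strongly compact. -/

import Mathlib

open Pointwise Set

/-- An asymmetric norm on a real vector space `X`. -/
structure IsAsymmetricNorm {X : Type*} [AddCommGroup X] [Module ℝ X] (q : X → ℝ) : Prop where
  nonneg : ∀ x, 0 ≤ q x
  smul_eq : ∀ a : ℝ, 0 ≤ a → ∀ x, q (a • x) = a * q x
  add_le : ∀ x y, q (x + y) ≤ q x + q y
  eq_zero : ∀ x, q x = 0 → q (-x) = 0 → x = 0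

/-- The topology `τ_q` generated by the open balls of `q`. -/
def asymTop {X : Type*} [AddCommGroup X] [Module ℝ X] (q : X → ℝ) : TopologicalSpace X :=
  TopologicalSpace.generateFrom {U | ∃ x : X, ∃ ε : ℝ, 0 < ε ∧ U = {y | q (y - x) < ε}}

/-- The symmetrization `q^s` of `q`. -/
def symNorm {X : Type*} [AddCommGroup X] (q : X → ℝ) (x : X) : ℝ := max (q x) (q (-x))

/-- The cone `θ_q = {x : q x = 0}`. -/
def theta {X : Type*} [AddCommGroup X] (q : X → ℝ) : Set X := {x | q x = 0}

/-- The closed ball `B_r^q[x] = {y : q (y - x) ≤ r}`. -/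
def closedBallA {X : Type*} [AddCommGroup X] (q : X → ℝ) (x : X) (r : ℝ) : Set X :=
  {y | q (y - x) ≤ r}

/-- A set `K` is strongly compact (w.r.t. the asymmetric norm `q`) if there is a set `S`,
compact in the topology of the norm `q^s`, with `S ⊆ K ⊆ S + θ_q`. -/
def StronglyCompact {X : Type*} [AddCommGroup X] [Module ℝ X] (q : X → ℝ) (K : Set X) : Prop :=
  ∃ S : Set X, @IsCompact X (asymTop (symNorm q)) S ∧ S ⊆ K ∧ K ⊆ S + theta q

/-- `q` is right bounded if `r • B_1^q[0] ⊆ B_1^{q^s}[0] + θ_q` for some `r > 0`. -/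
def RightBounded {X : Type*} [AddCommGroup X] [Module ℝ X] (q : X → ℝ) : Prop :=
  ∃ r : ℝ, 0 < r ∧ r • closedBallA q 0 1 ⊆ closedBallA (symNorm q) 0 1 + theta q

/-- `q` is 1-bounded if `B_1^q[0] ⊆ B_1^{q^s}[0] + θ_q`. -/
def OneBounded {X : Type*} [AddCommGroup X] [Module ℝ X] (q : X → ℝ) : Prop :=
  closedBallA q 0 1 ⊆ closedBallA (symNorm q) 0 1 + theta q

/-- Two asymmetric norms are equivalent if `κ·q ≤ p ≤ l·q` for some `κ, l > 0`. -/
def EquivNorms {X : Type*} [AddCommGroup X] (p q : X → ℝ) : Prop :=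
  ∃ κ l : ℝ, 0 < κ ∧ 0 < l ∧ ∀ x, κ * q x ≤ p x ∧ p x ≤ l * q x

/-- `X` is strongly locally compact (w.r.t. `τ_q`) if every point has a local base of
strongly compact sets. -/
def StronglyLocallyCompact {X : Type*} [AddCommGroup X] [Module ℝ X] (q : X → ℝ) : Prop :=
  ∀ x : X, ∀ U ∈ @nhds X (asymTop q) x,
    ∃ K : Set X, StronglyCompact q K ∧ K ∈ @nhds X (asymTop q) x ∧ K ⊆ U


set_option maxHeartbeats 1000000

open Topology Filter

noncomputable section AsymEx

def uc (n : ℕ) : ℝ := Real.cos (1/n)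
def us (n : ℕ) : ℝ := Real.sin (1/n)
def ell (n : ℕ) (a b : ℝ) : ℝ := n - 100^n * (1 - (a * uc n + b * us n))

lemma uc_def (n : ℕ) : uc n = Real.cos (1/n) := rfl
lemma us_def (n : ℕ) : us n = Real.sin (1/n) := rfl
lemma ell_def (n : ℕ) (a b : ℝ) : ell n a b = n - 100^n * (1 - (a * uc n + b * us n)) := rfl

lemma ucs_sq (n : ℕ) : uc n ^ 2 + us n ^ 2 = 1 := by
  rw [uc_def, us_def, add_comm]; exact Real.sin_sq_add_cos_sq _

lemma pow100 (n : ℕ) (hn : 1 ≤ n) : 100 * (n:ℝ) ≤ 100 ^ n := by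
  induction n with
  | zero => omega
  | succ m ih =>
    rcases Nat.eq_or_lt_of_le hn with h | h
    · simp [← h]
    · have hm : 1 ≤ m := by omega
      have := ih hm
      have h2 : (100:ℝ)^(m+1) = 100 * 100^m := by ring
      have hm' : (1:ℝ) ≤ m := by exact_mod_cast hm
      push_cast
      nlinarith

lemma e_mono {k j : ℕ} (hk : 1 ≤ k) (hkj : k ≤ j) : (j:ℝ)/100^j ≤ (k:ℝ)/100^k := by
  induction j with
  | zero => omega
  | succ m ih =>
    rcases Nat.eq_or_lt_of_le hkj with h | h
    · rw [h]
    · have hm : k ≤ m := by omega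
      have h1 := ih hm
      have hm1 : (1:ℝ) ≤ m := by exact_mod_cast le_trans hk hm
      have hp : (0:ℝ) < 100 ^ m := by positivity
      have key : ((m:ℝ)+1)/100^(m+1) ≤ (m:ℝ)/100^m := by
        rw [div_le_div_iff₀ (by positivity) hp]
        have h3 : (100:ℝ)^(m+1) = 100 * 100^m := by ring
        nlinarith
      push_cast at key ⊢
      linarith

lemma numeric_final (k : ℕ) (hk : 1 ≤ k) :
    2048 * (k:ℝ)^3 * ((k:ℝ)+1)^2 ≤ 225 * 100^k := by
  induction k with
  | zero => omega
  | succ m ih =>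
    rcases Nat.eq_or_lt_of_le hk with h | h
    · norm_num [← h]
    · have hm : 1 ≤ m := by omega
      have h1 := ih hm
      have hm1 : (1:ℝ) ≤ m := by exact_mod_cast hm
      have hp : (100:ℝ)^(m+1) = 100 * 100^m := by ring
      have hc1 : (m:ℝ)^2 ≤ (m:ℝ)^3 := by nlinarith
      have hc2 : (m:ℝ) ≤ (m:ℝ)^3 := by nlinarith
      have hc3 : (1:ℝ) ≤ (m:ℝ)^3 := by nlinarith
      have hA : ((m:ℝ)+1)*(((m:ℝ)+1)+1)^2 ≤ 18*(m:ℝ)^3 := by nlinarith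
      have h2 : 2048*((m:ℝ)+1)^3*(((m:ℝ)+1)+1)^2
          = 2048*((m:ℝ)+1)^2 * (((m:ℝ)+1)*(((m:ℝ)+1)+1)^2) := by ring
      have h3 : 2048*((m:ℝ)+1)^2 * (((m:ℝ)+1)*(((m:ℝ)+1)+1)^2)
          ≤ 2048*((m:ℝ)+1)^2 * (18*(m:ℝ)^3) :=
        mul_le_mul_of_nonneg_left hA (by positivity)
      have hX : (0:ℝ) ≤ (m:ℝ)^3*((m:ℝ)+1)^2 := by positivity
      have h4 : 2048*((m:ℝ)+1)^2 * (18*(m:ℝ)^3) ≤ 100 * (2048 * (m:ℝ)^3 * ((m:ℝ)+1)^2) := by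
        nlinarith
      push_cast
      nlinarith

lemma combo_ineq {ek ej dsq S cosd : ℝ} (h1 : (2-ek-ej)^2 < S^2) (h2 : S^2 ≤ 2+2*cosd)
    (h3 : (225/256)*dsq ≤ 2-2*cosd) (h4 : ej ≤ ek) (h5 : 0 < ej) :
    (225/256)*dsq < 8*ek := by nlinarith [sq_nonneg (ek+ej)]

lemma cs_two (a b X Y : ℝ) : (a*X + b*Y)^2 ≤ (a^2+b^2)*(X^2+Y^2) := by
  nlinarith [sq_nonneg (a*Y - b*X)]

lemma caps_disjoint' {k j : ℕ} (hk : 1 ≤ k) (hkj : k < j) {a b : ℝ} (hab : a^2 + b^2 ≤ 1) :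
    ¬(0 < ell k a b ∧ 0 < ell j a b) := by
  rintro ⟨h1, h2⟩
  have hK : (1:ℝ) ≤ k := by exact_mod_cast hk
  have hJ : (k:ℝ) + 1 ≤ j := by exact_mod_cast hkj
  have hK0 : (0:ℝ) < k := by linarith
  have hJ0 : (0:ℝ) < j := by linarith
  obtain ⟨d, hd⟩ : ∃ d : ℝ, d = 1/(k:ℝ) - 1/(j:ℝ) := ⟨_, rfl⟩
  have hd0 : 0 < d := by
    have : 1/(j:ℝ) < 1/(k:ℝ) := by
      rw [div_lt_div_iff₀ hJ0 hK0]; linarith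
    rw [hd]; linarith
  have hd1 : d ≤ 1 := by
    have h5 : 1/(j:ℝ) > 0 := by positivity
    have h6 : 1/(k:ℝ) ≤ 1 := by rw [div_le_one hK0]; exact hK
    rw [hd]; linarith
  have hdlow : 1/((k:ℝ)*((k:ℝ)+1)) ≤ d := by
    have h1j : 1/(j:ℝ) ≤ 1/((k:ℝ)+1) :=
      div_le_div_of_nonneg_left (by norm_num) (by linarith) hJ
    have h7 : 1/(k:ℝ) - 1/((k:ℝ)+1) = 1/((k:ℝ)*((k:ℝ)+1)) := by
      field_simp
      ring
    rw [hd]; linarith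
  have hpk : (0:ℝ) < 100^k := by positivity
  have hpj : (0:ℝ) < 100^j := by positivity
  obtain ⟨ek, hek⟩ : ∃ e : ℝ, e = (k:ℝ)/100^k := ⟨_, rfl⟩
  obtain ⟨ej, hej⟩ : ∃ e : ℝ, e = (j:ℝ)/100^j := ⟨_, rfl⟩
  have hek0 : 0 < ek := by rw [hek]; positivity
  have hej0 : 0 < ej := by rw [hej]; positivity
  have hcapk : 1 - ek < a * uc k + b * us k := by
    rw [ell_def] at h1
    rw [hek, sub_lt_comm, lt_div_iff₀ hpk]
    nlinarith
  have hcapj : 1 - ej < a * uc j + b * us j := by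
    rw [ell_def] at h2
    rw [hej, sub_lt_comm, lt_div_iff₀ hpj]
    nlinarith
  have hejk : ej ≤ ek := by rw [hek, hej]; exact e_mono hk (le_of_lt hkj)
  have heksmall : ek ≤ 1/100 := by
    have := pow100 k hk
    rw [hek, div_le_div_iff₀ hpk (by norm_num : (0:ℝ) < 100)]
    linarith
  obtain ⟨S, hS⟩ : ∃ S : ℝ, S = a * (uc k + uc j) + b * (us k + us j) := ⟨_, rfl⟩
  have hSlow : 2 - ek - ej < S := by rw [hS]; linarith
  have hS0 : 0 ≤ 2 - ek - ej := by linarith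
  have hcos : uc k * uc j + us k * us j = Real.cos d := by
    rw [uc_def, us_def, uc_def, us_def, hd, Real.cos_sub]
  have hnorm : (uc k + uc j)^2 + (us k + us j)^2 = 2 + 2 * Real.cos d := by
    have e1 := ucs_sq k
    have e2 := ucs_sq j
    linarith [hcos, sq_nonneg (uc k + uc j), sq_nonneg (us k + us j),
      sq_abs (uc k), (by ring : (uc k + uc j)^2 + (us k + us j)^2
        = (uc k^2 + us k^2) + (uc j^2 + us j^2) + 2*(uc k * uc j + us k * us j))]
  have hS2 : S^2 ≤ 2 + 2 * Real.cos d := by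
    have hCS := cs_two a b (uc k + uc j) (us k + us j)
    have hN0 : (0:ℝ) ≤ (uc k + uc j)^2 + (us k + us j)^2 := by positivity
    calc S^2 ≤ (a^2+b^2) * ((uc k + uc j)^2 + (us k + us j)^2) := by rw [hS]; exact hCS
    _ ≤ 1 * ((uc k + uc j)^2 + (us k + us j)^2) := mul_le_mul_of_nonneg_right hab hN0
    _ = 2 + 2 * Real.cos d := by rw [one_mul, hnorm]
  have hdsq1 : d^2 ≤ 1 := by nlinarith
  have hd3 : d^3 ≤ d := by nlinarith [hdsq1, hd0.le]
  have hsin : (15/32) * d ≤ Real.sin (d/2) := by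
    have h := Real.sin_gt_sub_cube (x := d/2) (by linarith)
    nlinarith
  have hs0 : (0:ℝ) ≤ (15/32) * d := by linarith
  have hsinsq : ((15/32)*d)^2 ≤ Real.sin (d/2)^2 := by
    apply pow_le_pow_left₀ hs0 hsin
  have hcc : Real.cos d = 1 - 2 * Real.sin (d/2)^2 := by
    rw [show d = 2*(d/2) by ring, Real.cos_two_mul']
    have := Real.sin_sq_add_cos_sq (d/2)
    rw [show 2*(d/2)/2 = d/2 by ring]
    nlinarith
  have hcosd : (225/256) * d^2 ≤ 2 - 2 * Real.cos d := by
    rw [hcc]; nlinarith [hsinsq]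
  have hsq : (2 - ek - ej)^2 < S^2 := by
    exact pow_lt_pow_left₀ hSlow hS0 (by norm_num)
  have hkey : (225/256) * d^2 < 8 * ek := combo_ineq hsq hS2 hcosd hejk hej0
  have hfin : (225/256) * (1/((k:ℝ)*((k:ℝ)+1)))^2 < 8 * ek := by
    have h0 : (0:ℝ) ≤ 1/((k:ℝ)*((k:ℝ)+1)) := by positivity
    have h1 : (1/((k:ℝ)*((k:ℝ)+1)))^2 ≤ d^2 := pow_le_pow_left₀ h0 hdlow 2
    nlinarith [hkey, h1]
  have hD0 : (0:ℝ) < (k:ℝ)*((k:ℝ)+1) := by positivity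
  have hP0 : (0:ℝ) < 100^k * ((k:ℝ)*((k:ℝ)+1))^2 := by positivity
  have hmul := mul_lt_mul_of_pos_right hfin hP0
  have hL : (225/256) * (1/((k:ℝ)*((k:ℝ)+1)))^2 * (100^k * ((k:ℝ)*((k:ℝ)+1))^2)
      = (225/256) * 100^k := by
    field_simp
  have hR : 8 * ek * (100^k * ((k:ℝ)*((k:ℝ)+1))^2)
      = 8 * (k:ℝ)^3 * ((k:ℝ)+1)^2 := by
    rw [hek]; field_simp
  rw [hL, hR] at hmul
  have hnum := numeric_final k hk
  linarith

lemma ip_le_one {n : ℕ} {a b : ℝ} (h : a^2 + b^2 ≤ 1) : a * uc n + b * us n ≤ 1 := by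
  nlinarith [sq_nonneg (a - uc n), sq_nonneg (b - us n), ucs_sq n]

lemma neg_one_le_ip {n : ℕ} {a b : ℝ} (h : a^2 + b^2 ≤ 1) : -1 ≤ a * uc n + b * us n := by
  nlinarith [sq_nonneg (a + uc n), sq_nonneg (b + us n), ucs_sq n]

lemma ip_le_quarter {n : ℕ} {a b : ℝ} (h : a^2 + b^2 ≤ 1/16) :
    a * uc n + b * us n ≤ 1/4 := by
  have hcs : (a * uc n + b * us n)^2 ≤ (a^2 + b^2) * (uc n ^2 + us n ^2) := by
    nlinarith [sq_nonneg (a * us n - b * uc n)]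
  rw [ucs_sq n] at hcs
  nlinarith [sq_nonneg (a * uc n + b * us n)]

lemma ell_le_self {n : ℕ} {a b : ℝ} (h : a^2 + b^2 ≤ 1) : ell n a b ≤ n := by
  have := ip_le_one (n := n) h
  have hp : (0:ℝ) ≤ 100^n := by positivity
  rw [ell_def]; nlinarith

lemma ell_one_ge {a b : ℝ} (h : a^2 + b^2 ≤ 1) : -199 ≤ ell 1 a b := by
  have h1 := neg_one_le_ip (n := 1) h
  have : (100:ℝ)^1 = 100 := by norm_num
  rw [ell_def]
  push_cast
  nlinarith

lemma ell_small {n : ℕ} (hn : 1 ≤ n) {a b : ℝ} (h : a^2 + b^2 ≤ 1/16) :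
    ell n a b ≤ -(1/2) := by
  have h1 := ip_le_quarter (n := n) h
  have h2 := pow100 n hn
  have hn' : (1:ℝ) ≤ n := by exact_mod_cast hn
  rw [ell_def]; nlinarith

/-- The convex body: epigraph (within the unit cylinder) of `sup_n ell (n+1)`. -/
def myB : Set (Fin 3 → ℝ) :=
  {v | (v 0)^2 + (v 1)^2 ≤ 1 ∧ ∀ n : ℕ, ell (n+1) (v 0) (v 1) ≤ v 2}

def qex : (Fin 3 → ℝ) → ℝ := gauge myB

lemma zero_mem_myB : (0 : Fin 3 → ℝ) ∈ myB := by
  constructor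
  · norm_num
  · intro n
    have h2 := pow100 (n+1) (by omega)
    have : ell (n+1) 0 0 = (n+1:ℝ) - 100^(n+1) := by
      rw [ell_def]; push_cast; ring
    simp only [Pi.zero_apply]
    rw [this]
    push_cast at h2 ⊢
    linarith

lemma ball_subset_myB : Metric.ball (0 : Fin 3 → ℝ) (1/8) ⊆ myB := by
  intro v hv
  rw [mem_ball_zero_iff] at hv
  have h0 : |v 0| < 1/8 := lt_of_le_of_lt (norm_le_pi_norm v 0) hv
  have h1 : |v 1| < 1/8 := lt_of_le_of_lt (norm_le_pi_norm v 1) hv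
  have h2 : |v 2| < 1/8 := lt_of_le_of_lt (norm_le_pi_norm v 2) hv
  have hsq : (v 0)^2 + (v 1)^2 ≤ 1/16 := by
    have := abs_nonneg (v 0)
    have := abs_nonneg (v 1)
    nlinarith [sq_abs (v 0), sq_abs (v 1)]
  refine ⟨by linarith, fun n => ?_⟩
  have := ell_small (n := n+1) (by omega) hsq
  have : v 2 > -(1/8) := by cases abs_lt.mp h2; linarith
  linarith [ell_small (n := n+1) (by omega) hsq]

lemma myB_mem_nhds : myB ∈ 𝓝 (0 : Fin 3 → ℝ) :=
  Filter.mem_of_superset (Metric.ball_mem_nhds 0 (by norm_num)) ball_subset_myB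

lemma myB_absorbent : Absorbent ℝ myB := absorbent_nhds_zero myB_mem_nhds

lemma myB_convex : Convex ℝ myB := by
  rintro x ⟨hx1, hx2⟩ y ⟨hy1, hy2⟩ α β hα hβ hαβ
  have hβ1 : β = 1 - α := by linarith
  subst hβ1
  have h1α : 0 ≤ 1 - α := hβ
  have e : ∀ i, (α • x + (1-α) • y) i = α * x i + (1-α) * y i := by
    intro i; simp [Pi.add_apply, Pi.smul_apply, smul_eq_mul]
  constructor
  · rw [e 0, e 1]
    nlinarith [mul_nonneg (mul_nonneg hα h1α) (sq_nonneg (x 0 - y 0)),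
      mul_nonneg (mul_nonneg hα h1α) (sq_nonneg (x 1 - y 1)),
      mul_nonneg hα (by linarith : (0:ℝ) ≤ 1 - (x 0^2 + x 1^2)),
      mul_nonneg h1α (by linarith : (0:ℝ) ≤ 1 - (y 0^2 + y 1^2))]
  · intro n
    rw [e 0, e 1, e 2]
    have l1 := hx2 n
    have l2 := hy2 n
    rw [ell_def] at l1 l2 ⊢
    nlinarith [mul_le_mul_of_nonneg_left l1 hα, mul_le_mul_of_nonneg_left l2 h1α]

lemma myB_closed : IsClosed myB := by
  have : myB = {v : Fin 3 → ℝ | (v 0)^2 + (v 1)^2 ≤ 1} ∩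
      ⋂ n : ℕ, {v : Fin 3 → ℝ | ell (n+1) (v 0) (v 1) ≤ v 2} := by
    ext v; simp [myB, mem_iInter]
  rw [this]
  refine IsClosed.inter ?_ (isClosed_iInter fun n => ?_)
  · exact isClosed_le (by fun_prop) continuous_const
  · apply isClosed_le _ (continuous_apply 2)
    simp only [ell_def]
    fun_prop

lemma q_le_one_iff (y : Fin 3 → ℝ) : qex y ≤ 1 ↔ y ∈ myB := by
  rw [qex, gauge_le_one_iff_mem_closure myB_convex myB_mem_nhds, myB_closed.closure_eq]

lemma mem_smul_bounds {lam : ℝ} (hl : 0 < lam) {x : Fin 3 → ℝ} (hx : x ∈ lam • myB) :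
    (x 0)^2 + (x 1)^2 ≤ lam^2 ∧ -(199*lam) ≤ x 2 := by
  obtain ⟨w, hw, hxw⟩ := hx
  obtain ⟨hw1, hw2⟩ := hw
  rw [← hxw]
  simp only [Pi.smul_apply, smul_eq_mul]
  constructor
  · nlinarith
  · have h1 := hw2 0
    have h2 := ell_one_ge hw1
    nlinarith

lemma abs_le_of_sq_le {x y : ℝ} (hy : 0 ≤ y) (h : x^2 ≤ y^2) : |x| ≤ y := by
  nlinarith [sq_abs x, abs_nonneg x]

lemma gauge_zero_struct {t : Fin 3 → ℝ} (h : qex t = 0) :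
    t 0 = 0 ∧ t 1 = 0 ∧ 0 ≤ t 2 := by
  have key : ∀ ε : ℝ, 0 < ε → ((t 0)^2 + (t 1)^2 ≤ ε^2 ∧ -(199*ε) ≤ t 2) := by
    intro ε hε
    obtain ⟨lam, hl0, hlε, hmem⟩ := exists_lt_of_gauge_lt myB_absorbent (by rw [← qex, h]; exact hε)
    obtain ⟨hb, hb2⟩ := mem_smul_bounds hl0 hmem
    constructor
    · nlinarith
    · nlinarith
  have h00 : t 0 = 0 := by
    by_contra h'
    have hp : 0 < |t 0| := abs_pos.mpr h'
    obtain ⟨hk, -⟩ := key (|t 0|/2) (by positivity)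
    nlinarith [sq_abs (t 0), sq_nonneg (t 1)]
  have h11 : t 1 = 0 := by
    by_contra h'
    have hp : 0 < |t 1| := abs_pos.mpr h'
    obtain ⟨hk, -⟩ := key (|t 1|/2) (by positivity)
    nlinarith [sq_abs (t 1), sq_nonneg (t 0)]
  have h22 : 0 ≤ t 2 := by
    by_contra h'
    push_neg at h'
    obtain ⟨-, hk⟩ := key (-(t 2)/398) (by linarith)
    linarith
  exact ⟨h00, h11, h22⟩

/-- symmetric version of cap disjointness -/
lemma caps_disjoint {k j : ℕ} (hk : 1 ≤ k) (hj : 1 ≤ j) (hne : k ≠ j) {a b : ℝ}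
    (hab : a^2 + b^2 ≤ 1) : ¬(0 < ell k a b ∧ 0 < ell j a b) := by
  rcases lt_or_gt_of_ne hne with h | h
  · exact caps_disjoint' hk h hab
  · intro hcon
    exact caps_disjoint' hj h hab ⟨hcon.2, hcon.1⟩

lemma ell_self (n : ℕ) : ell n (uc n) (us n) = n := by
  have h : uc n * uc n + us n * us n = 1 := by nlinarith [ucs_sq n]
  rw [ell_def, h]
  ring

lemma qex_asym : IsAsymmetricNorm qex := by
  constructor
  · exact fun x => gauge_nonneg x
  · intro a ha x
    rw [qex, gauge_smul_of_nonneg ha, smul_eq_mul]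
  · intro x y
    rw [qex]
    exact gauge_add_le myB_convex myB_absorbent x y
  · intro x h1 h2
    obtain ⟨a0, a1, a2⟩ := gauge_zero_struct h1
    obtain ⟨b0, b1, b2⟩ := gauge_zero_struct h2
    have hx2 : x 2 = 0 := by
      have : (-x) 2 = -(x 2) := rfl
      linarith [b2, a2, this ▸ b2]
    funext i
    fin_cases i
    · exact a0
    · exact a1
    · exact hx2

lemma ball_eq_myB : closedBallA qex 0 1 = myB := by
  ext y
  rw [closedBallA, mem_setOf_eq, sub_zero]
  exact q_le_one_iff y

theorem not_strong : ¬ StronglyCompact qex (closedBallA qex 0 1) := by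
  rintro ⟨S, hScpt, hSsub, hsup⟩
  -- extract a bound on S from compactness
  set U : ℕ → Set (Fin 3 → ℝ) := fun n => {y | symNorm qex (y - 0) < n+1} with hU
  have hUopen : ∀ n, IsOpen[asymTop (symNorm qex)] (U n) := by
    intro n
    apply TopologicalSpace.isOpen_generateFrom_of_mem
    exact ⟨0, n+1, by positivity, rfl⟩
  have hUcov : S ⊆ ⋃ n, U n := by
    intro s _
    obtain ⟨n, hn⟩ := exists_nat_gt (symNorm qex (s - 0))
    exact mem_iUnion.mpr ⟨n, by simp only [hU, mem_setOf_eq]; linarith⟩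
  obtain ⟨F, hF⟩ := @IsCompact.elim_finite_subcover (Fin 3 → ℝ) (asymTop (symNorm qex)) S ℕ
    hScpt U hUopen hUcov
  set N : ℕ := F.sup id + 1 with hN
  have hN1 : 1 ≤ N := by omega
  have hSN : ∀ s ∈ S, symNorm qex s < N := by
    intro s hs
    obtain ⟨n, hnF, hn⟩ := by
      have := hF hs
      rw [mem_iUnion₂] at this
      exact this
    rw [hU, mem_setOf_eq, sub_zero] at hn
    have h2 : (n:ℝ) + 1 ≤ (N:ℝ) := by
      have hle : n ≤ F.sup id := by simpa using Finset.le_sup (f := id) hnF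
      have : n + 1 ≤ N := by omega
      exact_mod_cast this
    linarith
  have hbound : ∀ s ∈ S, s 2 < 200 * (N:ℝ) := by
    intro s hs
    have hq : qex (-s) < N := by
      have := hSN s hs
      rw [symNorm] at this
      exact lt_of_le_of_lt (le_max_right _ _) this
    obtain ⟨lam, hl0, hlN, hmem⟩ := exists_lt_of_gauge_lt myB_absorbent hq
    obtain ⟨-, hb2⟩ := mem_smul_bounds hl0 hmem
    have he : (-s) 2 = -(s 2) := rfl
    rw [he] at hb2
    have hN1' : (1:ℝ) ≤ N := by exact_mod_cast hN1
    nlinarith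
  -- the spike point
  set j : ℕ := 200 * N with hj
  have hj1 : 1 ≤ j := by omega
  set P : Fin 3 → ℝ := ![uc j, us j, (j:ℝ)] with hP
  have hPmem : P ∈ closedBallA qex 0 1 := by
    rw [ball_eq_myB]
    have hP0 : P 0 = uc j := rfl
    have hP1 : P 1 = us j := rfl
    have hP2 : P 2 = (j:ℝ) := rfl
    constructor
    · rw [hP0, hP1, ucs_sq j]
    · intro n
      rw [hP0, hP1, hP2]
      by_cases hn : n + 1 = j
      · rw [hn, ell_self j]
      · have hdis := caps_disjoint (k := n+1) (j := j) (by omega) hj1 hn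
          (le_of_eq (ucs_sq j))
        have hjpos : 0 < ell j (uc j) (us j) := by
          rw [ell_self j]
          exact_mod_cast Nat.lt_of_lt_of_le Nat.zero_lt_one hj1
        have : ¬ (0 < ell (n+1) (uc j) (us j)) := fun hc => hdis ⟨hc, hjpos⟩
        push_neg at this
        have hj0 : (0:ℝ) ≤ j := Nat.cast_nonneg j
        linarith
  obtain ⟨s, hsS, t, htθ, hst⟩ := hsup hPmem
  obtain ⟨t0z, t1z, t2nn⟩ := gauge_zero_struct (by exact htθ)
  have e0 : s 0 + t 0 = P 0 := congrFun hst 0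
  have e1 : s 1 + t 1 = P 1 := congrFun hst 1
  have e2 : s 2 + t 2 = P 2 := congrFun hst 2
  have hs0 : s 0 = uc j := by rw [t0z] at e0; simpa [hP] using e0
  have hs1 : s 1 = us j := by rw [t1z] at e1; simpa [hP] using e1
  have hs2 : s 2 ≤ (j:ℝ) := by
    have : P 2 = (j:ℝ) := rfl
    rw [this] at e2; linarith
  have hsmem : s ∈ myB := by
    have := hSsub hsS
    rwa [ball_eq_myB] at this
  have hlow : ell j (s 0) (s 1) ≤ s 2 := by
    have := hsmem.2 (j - 1)
    have hjj : j - 1 + 1 = j := by omega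
    rwa [hjj] at this
  rw [hs0, hs1, ell_self j] at hlow
  have hfin := hbound s hsS
  have hcast : (j:ℝ) = 200 * (N:ℝ) := by rw [hj]; push_cast; ring
  linarith [hcast ▸ hlow]

/-- the boundary function -/
def fB (a b : ℝ) : ℝ := ⨆ n : ℕ, ell (n+1) a b

lemma fB_bddAbove {a b : ℝ} (h : a^2 + b^2 ≤ 1) :
    BddAbove (range fun n : ℕ => ell (n+1) a b) := by
  by_cases hc : ∃ m : ℕ, 0 < ell (m+1) a b
  · obtain ⟨m, hm⟩ := hc
    refine ⟨(m:ℝ)+1, ?_⟩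
    rintro _ ⟨n, rfl⟩
    by_cases hnm : n = m
    · subst hnm
      have := ell_le_self (n := n+1) h
      push_cast at this ⊢
      linarith
    · have hdis := caps_disjoint (k := n+1) (j := m+1) (by omega) (by omega)
        (by omega) h
      have : ¬ (0 < ell (n+1) a b) := fun hcon => hdis ⟨hcon, hm⟩
      push_neg at this
      have h0 : ell (n+1) a b ≤ 0 := this
      have hm0 : (0:ℝ) ≤ (m:ℝ)+1 := by positivity
      linarith
  · push_neg at hc
    exact ⟨0, by rintro _ ⟨n, rfl⟩; exact hc n⟩

lemma le_fB {a b : ℝ} (h : a^2 + b^2 ≤ 1) (n : ℕ) : ell (n+1) a b ≤ fB a b :=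
  le_ciSup (fB_bddAbove h) n

lemma fB_le {a b c : ℝ} (hc : ∀ n : ℕ, ell (n+1) a b ≤ c) : fB a b ≤ c :=
  ciSup_le hc

lemma lt_fB {a b c : ℝ} (hc : c < fB a b) : ∃ n : ℕ, c < ell (n+1) a b :=
  exists_lt_of_lt_ciSup hc

lemma fB_small {a b : ℝ} (h : a^2 + b^2 ≤ 1/16) : fB a b ≤ -(1/2) :=
  ciSup_le fun n => ell_small (by omega) h

lemma mem_myB_iff {v : Fin 3 → ℝ} :
    v ∈ myB ↔ (v 0)^2 + (v 1)^2 ≤ 1 ∧ fB (v 0) (v 1) ≤ v 2 := by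
  constructor
  · rintro ⟨h1, h2⟩; exact ⟨h1, fB_le h2⟩
  · rintro ⟨h1, h2⟩; exact ⟨h1, fun n => le_trans (le_fB h1 n) h2⟩

/-- compact parameter domain -/
def Kdom : Set (Fin 3 → ℝ) := {p | (p 0)^2 + (p 1)^2 ≤ 1 ∧ p 2 ∈ Icc (0:ℝ) 1}

def Tmap (t : ℝ) : ℝ := t / (1 - t)

lemma Tmap_def (t : ℝ) : Tmap t = t / (1 - t) := rfl

def gmap (p : Fin 3 → ℝ) : Fin 3 → ℝ := ![p 0, p 1, fB (p 0) (p 1) + Tmap (p 2)]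

lemma Tmap_nonneg {t : ℝ} (h : t ∈ Icc (0:ℝ) 1) : 0 ≤ Tmap t := by
  rcases eq_or_lt_of_le h.2 with h1 | h1
  · rw [Tmap, h1]; norm_num
  · exact div_nonneg h.1 (by linarith)

lemma Kdom_compact : IsCompact Kdom := by
  have hsub : Kdom ⊆ Metric.closedBall (0 : Fin 3 → ℝ) 1 := by
    rintro p ⟨h1, h2⟩
    rw [Metric.mem_closedBall, dist_zero_right]
    apply pi_norm_le_iff_of_nonneg (by norm_num) |>.mpr
    intro i
    fin_cases i
    · show |p 0| ≤ 1
      exact abs_le_of_sq_le zero_le_one (by nlinarith [sq_nonneg (p 1)])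
    · show |p 1| ≤ 1
      exact abs_le_of_sq_le zero_le_one (by nlinarith [sq_nonneg (p 0)])
    · show |p 2| ≤ 1
      rw [abs_le]; exact ⟨by linarith [h2.1], h2.2⟩
  have hclosed : IsClosed Kdom := by
    have : Kdom = {p : Fin 3 → ℝ | (p 0)^2 + (p 1)^2 ≤ 1} ∩
        ((fun p : Fin 3 → ℝ => p 2) ⁻¹' Icc (0:ℝ) 1) := rfl
    rw [this]
    exact (isClosed_le (by fun_prop) continuous_const).inter
      (isClosed_Icc.preimage (continuous_apply 2))
  exact (isCompact_closedBall _ _).of_isClosed_subset hclosed hsub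

lemma gmap_image : gmap '' Kdom = myB := by
  apply Subset.antisymm
  · rintro _ ⟨p, ⟨hp1, hp2⟩, rfl⟩
    rw [mem_myB_iff]
    have e0 : gmap p 0 = p 0 := rfl
    have e1 : gmap p 1 = p 1 := rfl
    have e2 : gmap p 2 = fB (p 0) (p 1) + Tmap (p 2) := rfl
    rw [e0, e1, e2]
    exact ⟨hp1, by linarith [Tmap_nonneg hp2]⟩
  · intro v hv
    rw [mem_myB_iff] at hv
    obtain ⟨h1, h2⟩ := hv
    set z : ℝ := v 2 - fB (v 0) (v 1) with hz
    have hz0 : 0 ≤ z := by rw [hz]; linarith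
    have hd0 : 0 < 1 + z := by linarith
    refine ⟨![v 0, v 1, z / (1 + z)], ⟨by simpa using h1, ?_, ?_⟩, ?_⟩
    · show (0:ℝ) ≤ z / (1+z)
      positivity
    · show z / (1+z) ≤ 1
      rw [div_le_one hd0]; linarith
    · funext i
      fin_cases i
      · rfl
      · rfl
      · show fB (v 0) (v 1) + Tmap (z / (1+z)) = v 2
        have : Tmap (z / (1+z)) = z := by
          rw [Tmap]
          have h3 : 1 - z/(1+z) = 1/(1+z) := by field_simp; ring
          rw [h3]
          field_simp
        rw [this, hz]; ring

lemma ell_cont (n : ℕ) : Continuous (fun p : Fin 3 → ℝ => ell n (p 0) (p 1)) := by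
  simp only [ell_def]
  fun_prop

lemma gmap_continuousOn : @ContinuousOn (Fin 3 → ℝ) (Fin 3 → ℝ) _ (asymTop qex) gmap Kdom := by
  intro x hx
  show Filter.Tendsto gmap (𝓝[Kdom] x) (@nhds _ (asymTop qex) (gmap x))
  unfold asymTop
  rw [TopologicalSpace.tendsto_nhds_generateFrom_iff]
  rintro U ⟨c, ε, hε, rfl⟩ hgx
  rw [mem_setOf_eq] at hgx
  set δ : ℝ := ε - qex (gmap x - c) with hδ
  have hδ0 : 0 < δ := by rw [hδ]; linarith
  have hx1 : (x 0)^2 + (x 1)^2 ≤ 1 := hx.1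
  -- lsc of fB : pick an approximating affine piece
  obtain ⟨m, hm⟩ := lt_fB (show fB (x 0) (x 1) - δ/16 < fB (x 0) (x 1) by linarith)
  -- the four neighbourhood events
  have E1 : {p : Fin 3 → ℝ | |p 0 - x 0| < δ/16 ∧ |p 1 - x 1| < δ/16} ∈ 𝓝[Kdom] x := by
    apply mem_nhdsWithin_of_mem_nhds
    have ho : IsOpen {p : Fin 3 → ℝ | |p 0 - x 0| < δ/16 ∧ |p 1 - x 1| < δ/16} := by
      apply IsOpen.inter
      · have : Continuous (fun p : Fin 3 → ℝ => |p 0 - x 0|) := by fun_prop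
        exact isOpen_lt this continuous_const
      · have : Continuous (fun p : Fin 3 → ℝ => |p 1 - x 1|) := by fun_prop
        exact isOpen_lt this continuous_const
    apply ho.mem_nhds
    rw [mem_setOf_eq]
    constructor <;> (rw [sub_self, abs_zero]; positivity)
  have E2 : {p : Fin 3 → ℝ | fB (x 0) (x 1) - δ/8 < ell (m+1) (p 0) (p 1)} ∈ 𝓝[Kdom] x := by
    apply mem_nhdsWithin_of_mem_nhds
    apply (isOpen_lt continuous_const (ell_cont (m+1))).mem_nhds
    rw [mem_setOf_eq]
    linarith
  have E3 : {p : Fin 3 → ℝ | fB (x 0) (x 1) + Tmap (x 2) - δ/4 ≤ fB (x 0) (x 1) - δ/8 + Tmap (p 2)}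
      ∈ 𝓝[Kdom] x := by
    rcases eq_or_lt_of_le hx.2.2 with h1 | h1
    · -- x 2 = 1 : Tmap (x 2) = 0 and Tmap (p 2) ≥ 0 on Kdom
      have hT0 : Tmap (x 2) = 0 := by rw [h1, Tmap_def]; norm_num
      apply Filter.mem_of_superset self_mem_nhdsWithin
      intro p hp
      rw [mem_setOf_eq, hT0]
      linarith [Tmap_nonneg hp.2]
    · -- x 2 < 1 : T continuous at x 2
      apply mem_nhdsWithin_of_mem_nhds
      have hTcont : ContinuousAt Tmap (x 2) := by
        apply ContinuousAt.div continuousAt_id (continuousAt_const.sub continuousAt_id)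
        intro h; have h' : 1 - x 2 = 0 := h; rw [sub_eq_zero] at h'; exact absurd h'.symm (ne_of_lt h1)
      have hcont : ContinuousAt (fun p : Fin 3 → ℝ => Tmap (p 2)) x :=
        ContinuousAt.comp (g := Tmap) (f := fun p : Fin 3 → ℝ => p 2) (x := x) hTcont ((continuous_apply 2).continuousAt)
      have : {t : ℝ | Tmap (x 2) - δ/8 < t} ∈ 𝓝 (Tmap (x 2)) := by
        apply (isOpen_lt continuous_const continuous_id).mem_nhds
        simp only [mem_setOf_eq, id_eq]; linarith
      have h7 := hcont this
      rw [Filter.mem_map] at h7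
      apply Filter.mem_of_superset h7
      intro p hp
      rw [mem_preimage, mem_setOf_eq] at hp
      rw [mem_setOf_eq]
      linarith
  have EK : Kdom ∈ 𝓝[Kdom] x := self_mem_nhdsWithin
  have hcomb := Filter.inter_mem (Filter.inter_mem (Filter.inter_mem E1 E2) E3) EK
  apply Filter.mem_of_superset hcomb
  rintro p ⟨⟨⟨⟨hp1a, hp1b⟩, hp2⟩, hp3⟩, hpK⟩
  rw [mem_setOf_eq] at hp2 hp3
  rw [mem_preimage, mem_setOf_eq]
  -- key smallness:  qex (gmap p - gmap x) ≤ δ/2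
  have hkey : qex (gmap p - gmap x) ≤ δ/2 := by
    apply gauge_le_of_mem (by positivity)
    rw [mem_smul_set_iff_inv_smul_mem₀ (by positivity : (δ/2 : ℝ) ≠ 0)]
    have w0 : ((δ/2)⁻¹ • (gmap p - gmap x)) 0 = (δ/2)⁻¹ * (p 0 - x 0) := rfl
    have w1 : ((δ/2)⁻¹ • (gmap p - gmap x)) 1 = (δ/2)⁻¹ * (p 1 - x 1) := rfl
    have w2 : ((δ/2)⁻¹ • (gmap p - gmap x)) 2 =
        (δ/2)⁻¹ * ((fB (p 0) (p 1) + Tmap (p 2)) - (fB (x 0) (x 1) + Tmap (x 2))) := rfl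
    have hsq : ((δ/2)⁻¹ * (p 0 - x 0))^2 + ((δ/2)⁻¹ * (p 1 - x 1))^2 ≤ 1/16 := by
      have h16 : (0:ℝ) < δ/16 := by positivity
      have a0 := abs_nonneg (p 0 - x 0)
      have a1 := abs_nonneg (p 1 - x 1)
      have i0 : (p 0 - x 0)^2 ≤ (δ/16)^2 := by nlinarith [sq_abs (p 0 - x 0), hp1a]
      have i1 : (p 1 - x 1)^2 ≤ (δ/16)^2 := by nlinarith [sq_abs (p 1 - x 1), hp1b]
      have hinv : (δ/2)⁻¹ = 2/δ := by rw [inv_div]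
      rw [hinv]
      have : (2/δ * (p 0 - x 0))^2 + (2/δ * (p 1 - x 1))^2
          = (2/δ)^2 * ((p 0 - x 0)^2 + (p 1 - x 1)^2) := by ring
      rw [this]
      have h2 : (2/δ)^2 * ((p 0 - x 0)^2 + (p 1 - x 1)^2) ≤ (2/δ)^2 * (2 * (δ/16)^2) := by
        apply mul_le_mul_of_nonneg_left (by linarith) (by positivity)
      have h3 : (2/δ)^2 * (2 * (δ/16)^2) = 1/32 := by
        field_simp; ring
      linarith
    constructor
    · rw [w0, w1]; linarith
    · intro n
      rw [w0, w1, w2]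
      have hF : fB (p 0) (p 1) + Tmap (p 2) - (fB (x 0) (x 1) + Tmap (x 2)) ≥ -(δ/4) := by
        have hfp : fB (x 0) (x 1) - δ/8 < fB (p 0) (p 1) :=
          lt_of_lt_of_le hp2 (le_fB hpK.1 m)
        linarith [hp3]
      have hF' : -(δ/4) ≤ (fB (p 0) (p 1) + Tmap (p 2)) - (fB (x 0) (x 1) + Tmap (x 2)) := by
        linarith
      have hw2 : -(1/2) ≤ (δ/2)⁻¹ *
          ((fB (p 0) (p 1) + Tmap (p 2)) - (fB (x 0) (x 1) + Tmap (x 2))) := by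
        have hpos : (0:ℝ) ≤ (δ/2)⁻¹ := by positivity
        have h5 := mul_le_mul_of_nonneg_left hF' hpos
        have h6 : (δ/2)⁻¹ * (-(δ/4)) = -(1/2) := by field_simp; ring
        linarith
      have := ell_small (n := n+1) (by omega) hsq
      linarith
  -- triangle inequality
  have htri := gauge_add_le myB_convex myB_absorbent (gmap p - gmap x) (gmap x - c)
  rw [sub_add_sub_cancel] at htri
  have : qex (gmap p - c) ≤ qex (gmap p - gmap x) + qex (gmap x - c) := htri
  rw [hδ] at hkey
  linarith [hkey, this]

theorem ball_cpt : @IsCompact (Fin 3 → ℝ) (asymTop qex) (closedBallA qex 0 1) := by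
  rw [ball_eq_myB, ← gmap_image]
  exact @IsCompact.image_of_continuousOn _ _ _ (asymTop qex) _ _ Kdom_compact gmap_continuousOn

end AsymEx

theorem statement16 :
    ∃ q : (Fin 3 → ℝ) → ℝ, IsAsymmetricNorm q ∧
      @IsCompact (Fin 3 → ℝ) (asymTop q) (closedBallA q 0 1) ∧
      ¬ StronglyCompact q (closedBallA q 0 1) :=
  ⟨qex, qex_asym, ball_cpt, not_strong⟩
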